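/- With the notation of the Taylor map T_ψ(a) = Σ_α ψ(δ^α a)·t^α/α! from a commutative ring R with m commuting derivations δ₁,…,δₘ to S[[t₁,…,tₘ]] (S a commutative ℚ-algebra, ψ : R → S a ring homomorphism), the map T_ψ is a differential homomorphism: T_ψ(δᵢ a) = ∂/∂tᵢ (T_ψ(a)) for every a ∈ R and every 1 ≤ i ≤ m. -/

import Mathlib

open scoped BigOperators

/-- The iterated derivative `δ^α = δ₁^{α₁} ∘ ⋯ ∘ δₘ^{αₘ}`. -/
noncomputable def multiDeriv {R : Type*} [CommRing R] {m : ℕ}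
    (δ : Fin m → Derivation ℤ R R) (α : Fin m →₀ ℕ) : R → R :=
  (List.ofFn fun i : Fin m => (⇑(δ i))^[α i]).foldr (· ∘ ·) id

/-- The Taylor map `T_ψ(a) = Σ_α ψ(δ^α a) · t^α / α!`. -/
noncomputable def taylorMap {R S : Type*} [CommRing R] [CommRing S] [Algebra ℚ S] {m : ℕ}
    (δ : Fin m → Derivation ℤ R R) (ψ : R →+* S) (a : R) :
    MvPowerSeries (Fin m) S :=
  fun α => (((∏ i, (α i).factorial) : ℕ) : ℚ)⁻¹ • ψ (multiDeriv δ α a)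

/-- The partial derivative `∂/∂tᵢ` on multivariate power series, defined
coefficientwise: the coefficient of `t^α` in `∂f/∂tᵢ` is `(αᵢ + 1)` times the
coefficient of `t^{α + eᵢ}` in `f`. -/
noncomputable def mvPowerSeriesPderiv {S : Type*} [CommRing S] {m : ℕ} (i : Fin m)
    (f : MvPowerSeries (Fin m) S) : MvPowerSeries (Fin m) S :=
  fun α => (α i + 1 : ℕ) • f (α + Finsupp.single i 1)

section Aux

variable {R : Type*}

/-- Fold of a list of commuting functions. -/
private def foldF {m : ℕ} (d : Fin m → R → R) (a : Fin m → ℕ) : R → R :=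
  (List.ofFn fun i : Fin m => (d i)^[a i]).foldr (· ∘ ·) id

private lemma foldF_succ {m : ℕ} (d : Fin (m + 1) → R → R) (a : Fin (m + 1) → ℕ) :
    foldF d a = (d 0)^[a 0] ∘ foldF (Fin.tail d) (Fin.tail a) := by
  simp [foldF, List.ofFn_succ, Fin.tail]

private lemma foldr_comp_comm (g : R → R) (l : List (R → R))
    (h : ∀ f ∈ l, ∀ x, f (g x) = g (f x)) (x : R) :
    l.foldr (· ∘ ·) id (g x) = g (l.foldr (· ∘ ·) id x) := by
  induction l with
  | nil => rfl
  | cons f t ih =>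
    simp only [List.foldr_cons, Function.comp_apply]
    rw [ih (fun f hf => h f (List.mem_cons_of_mem _ hf)),
      h f List.mem_cons_self]

private lemma foldF_comm {m : ℕ} (d : Fin m → R → R)
    (h : ∀ i j : Fin m, ∀ x, d i (d j x) = d j (d i x))
    (a : Fin m → ℕ) (i : Fin m) (x : R) :
    foldF d a (d i x) = d i (foldF d a x) := by
  refine foldr_comp_comm (d i) _ ?_ x
  intro f hf y
  obtain ⟨j, rfl⟩ := List.mem_ofFn.mp hf
  exact ((Function.Commute.iterate_left (fun z => h j i z) (a j)) y)

private lemma foldF_update {m : ℕ} (d : Fin m → R → R)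
    (h : ∀ i j : Fin m, ∀ x, d i (d j x) = d j (d i x))
    (a : Fin m → ℕ) (i : Fin m) (x : R) :
    foldF d (Function.update a i (a i + 1)) x = d i (foldF d a x) := by
  induction m with
  | zero => exact i.elim0
  | succ n ih =>
    rw [foldF_succ, foldF_succ d a]
    refine Fin.cases ?_ ?_ i
    · have h0 : Fin.tail (Function.update a 0 (a 0 + 1)) = Fin.tail a := by
        funext k
        simp [Fin.tail, Function.update, Fin.succ_ne_zero]
      simp only [Function.comp_apply, h0, Function.update_self,
        Function.iterate_succ_apply']
    · intro k
      have h0 : Function.update a k.succ (a k.succ + 1) 0 = a 0 := by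
        simp [Function.update, (Fin.succ_ne_zero k).symm]
      have ht : Fin.tail (Function.update a k.succ (a k.succ + 1)) =
          Function.update (Fin.tail a) k (Fin.tail a k + 1) := by
        funext j
        by_cases hj : j = k
        · subst hj; simp [Fin.tail]
        · simp [Fin.tail, Function.update, hj,
            fun hc : j.succ = k.succ => hj (Fin.succ_injective _ hc)]
      rw [Function.comp_apply, Function.comp_apply, h0, ht,
        ih (Fin.tail d) (fun i j x => h i.succ j.succ x) (Fin.tail a) k]
      exact (Function.Commute.iterate_left (fun z => h 0 k.succ z) (a 0)) _

private lemma multiDeriv_eq_foldF [CommRing R] {m : ℕ}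
    (δ : Fin m → Derivation ℤ R R) (α : Fin m →₀ ℕ) :
    multiDeriv δ α = foldF (fun i => ⇑(δ i)) ⇑α := rfl

private lemma coe_add_single {m : ℕ} (α : Fin m →₀ ℕ) (i : Fin m) :
    ((α + Finsupp.single i 1 : Fin m →₀ ℕ) : Fin m → ℕ) = Function.update (⇑α) i (α i + 1) := by
  funext j
  by_cases hj : j = i
  · subst hj; simp
  · simp [Function.update, hj, Finsupp.single_apply, Ne.symm hj]

end Aux

/-- The Taylor map `T_ψ` is a differential homomorphism:
`T_ψ(δᵢ a) = ∂/∂tᵢ (T_ψ(a))` for every `a ∈ R` and every `i`. -/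
theorem taylorMap_differential {R S : Type*} [CommRing R] [CommRing S] [Algebra ℚ S] {m : ℕ}
    (δ : Fin m → Derivation ℤ R R)
    (hcomm : ∀ i j : Fin m, ∀ a : R, δ i (δ j a) = δ j (δ i a))
    (ψ : R →+* S) :
    ∀ (a : R) (i : Fin m),
      taylorMap δ ψ (δ i a) = mvPowerSeriesPderiv i (taylorMap δ ψ a) := by
  intro a i
  funext α
  have hc : ∀ i j : Fin m, ∀ x : R, (δ i) ((δ j) x) = (δ j) ((δ i) x) := hcomm
  -- rewrite the two multiDeriv terms to a common value
  have h1 : multiDeriv δ α (δ i a) = δ i (multiDeriv δ α a) := by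
    rw [multiDeriv_eq_foldF]
    exact foldF_comm _ hc _ i a
  have h2 : multiDeriv δ (α + Finsupp.single i 1) a = δ i (multiDeriv δ α a) := by
    rw [multiDeriv_eq_foldF, multiDeriv_eq_foldF, coe_add_single]
    exact foldF_update _ hc _ i a
  simp only [taylorMap, mvPowerSeriesPderiv, h1, h2]
  -- factorial identity
  have hprod : (∏ j, ((α + Finsupp.single i 1 : Fin m →₀ ℕ) j).factorial) =
      (α i + 1) * ∏ j, (α j).factorial := by
    have : ∀ j, ((α + Finsupp.single i 1 : Fin m →₀ ℕ) j).factorial =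
        Function.update (fun j => (α j).factorial) i ((α i + 1) * (α i).factorial) j := by
      intro j
      rw [coe_add_single]
      by_cases hj : j = i
      · subst hj; simp [Nat.factorial_succ]
      · simp [Function.update, hj]
    rw [Finset.prod_congr rfl fun j _ => this j,
      Finset.prod_update_of_mem (Finset.mem_univ i),
      ← Finset.mul_prod_erase Finset.univ (fun j => (α j).factorial) (Finset.mem_univ i),
      mul_assoc, Finset.sdiff_singleton_eq_erase]
  rw [hprod, ← Nat.cast_smul_eq_nsmul ℚ, smul_smul]
  congr 1
  have hne : ((α i : ℚ) + 1) ≠ 0 := by positivity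
  push_cast
  rw [mul_inv, ← mul_assoc, mul_inv_cancel₀ hne, one_mul]
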